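/- (Cheeger–Simons exact sequence) For a smooth manifold M there is a short exact sequence of abelian groups 0 → H^1(M, ℝ/ℤ) → H^2(DC_2^•(M)) → Ω^2_{ℤ,cl}(M) → 0, where the right map sends the class of (c, h, ω) to ω and Ω^2_{ℤ,cl}(M) is the group of closed 2-forms with integral periods. -/

import Mathlib

open Manifold Finset
noncomputable section

/-- The `i`-th face embedding of the standard `n`-simplex into the standard `n+1`-simplex,
as a linear map (insertion of `0` at the `i`-th vertex coordinate). -/
def faceLM (n : ℕ) (i : Fin (n + 2)) : (Fin (n + 1) → ℝ) →ₗ[ℝ] (Fin (n + 2) → ℝ) where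
  toFun x j := ∑ k, if i.succAbove k = j then x k else 0
  map_add' x y := by
    funext j
    show (∑ k, if i.succAbove k = j then (x k + y k) else 0) =
      (∑ k, if i.succAbove k = j then x k else 0) + (∑ k, if i.succAbove k = j then y k else 0)
    rw [← Finset.sum_add_distrib]
    exact Finset.sum_congr rfl fun k _ => by split <;> simp
  map_smul' c x := by
    funext j
    show (∑ k, if i.succAbove k = j then (c * x k) else 0) =
      c * ∑ k, if i.succAbove k = j then x k else 0
    rw [Finset.mul_sum]
    exact Finset.sum_congr rfl fun k _ => by split <;> simp

lemma faceLM_apply (n : ℕ) (i : Fin (n + 2)) (x : Fin (n + 1) → ℝ) (j : Fin (n + 2)) :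
    faceLM n i x j = ∑ k, if i.succAbove k = j then x k else 0 := rfl

lemma faceLM_mapsTo (n : ℕ) (i : Fin (n + 2)) :
    Set.MapsTo (faceLM n i) (stdSimplex ℝ (Fin (n + 1))) (stdSimplex ℝ (Fin (n + 2))) := by
  intro x hx
  obtain ⟨hx0, hx1⟩ := hx
  constructor
  · intro j
    rw [faceLM_apply]
    refine Finset.sum_nonneg fun k _ => ?_
    split
    · exact hx0 k
    · exact le_refl 0
  · calc ∑ j, faceLM n i x j
        = ∑ j, ∑ k, (if i.succAbove k = j then x k else 0) :=
          Finset.sum_congr rfl fun j _ => faceLM_apply n i x j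
      _ = ∑ k, ∑ j, (if i.succAbove k = j then x k else 0) := Finset.sum_comm
      _ = ∑ k, x k := Finset.sum_congr rfl fun k _ => by simp [Finset.sum_ite_eq]
      _ = 1 := hx1

variable {E : Type} [NormedAddCommGroup E] [NormedSpace ℝ E]
  {H : Type} [TopologicalSpace H] (I : ModelWithCorners ℝ E H)
  (M : Type) [TopologicalSpace M] [ChartedSpace H M]

/-- A smooth singular `n`-simplex in a manifold `M`. -/
structure SSimplex (n : ℕ) where
  toFun : (Fin (n + 1) → ℝ) → M
  smooth : ContMDiffOn 𝓘(ℝ, Fin (n + 1) → ℝ) I (⊤ : ℕ∞) toFun (stdSimplex ℝ (Fin (n + 1)))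

variable {I M}

/-- The `i`-th face of a smooth singular simplex. -/
def SSimplex.face {n : ℕ} (σ : SSimplex I M (n + 1)) (i : Fin (n + 2)) : SSimplex I M n where
  toFun := σ.toFun ∘ (faceLM n i)
  smooth := by
    have h1 : ContMDiff 𝓘(ℝ, Fin (n+1) → ℝ) 𝓘(ℝ, Fin (n+2) → ℝ) (⊤ : ℕ∞) ⇑(faceLM n i) := by
      rw [← LinearMap.coe_toContinuousLinearMap' (faceLM n i)]
      exact (ContinuousLinearMap.contDiff _).contMDiff
    exact σ.smooth.comp h1.contMDiffOn (faceLM_mapsTo n i)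

variable (I M)

/-- Smooth singular chains. -/
def SChain (n : ℕ) : Type := FreeAbelianGroup (SSimplex I M n)

instance (n : ℕ) : AddCommGroup (SChain I M n) :=
  inferInstanceAs (AddCommGroup (FreeAbelianGroup (SSimplex I M n)))

/-- The boundary operator on smooth singular chains. -/
def sbd (n : ℕ) : SChain I M (n + 1) →+ SChain I M n :=
  ∑ i : Fin (n + 2), (-1 : ℤ) ^ (i : ℕ) • FreeAbelianGroup.map (fun σ => σ.face i)

variable (R : Type) [AddCommGroup R]

/-- Smooth singular cochains with coefficients in `R`. -/
def SCochain (n : ℕ) : Type := SSimplex I M n → R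

instance (n : ℕ) : AddCommGroup (SCochain I M R n) :=
  inferInstanceAs (AddCommGroup (SSimplex I M n → R))

/-- The coboundary on smooth singular cochains. -/
def scd (n : ℕ) : SCochain I M R n →+ SCochain I M R (n + 1) :=
  AddMonoidHom.mk' (fun c σ => ∑ i : Fin (n + 2), (-1 : ℤ) ^ (i : ℕ) • c (σ.face i))
    (by
      intro c c'
      funext σ
      show ∑ i : Fin (n + 2), (-1 : ℤ) ^ (i : ℕ) • (c (σ.face i) + c' (σ.face i)) =
        (∑ i : Fin (n + 2), (-1 : ℤ) ^ (i : ℕ) • c (σ.face i)) +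
          ∑ i : Fin (n + 2), (-1 : ℤ) ^ (i : ℕ) • c' (σ.face i)
      simp [smul_add, Finset.sum_add_distrib])

/-- Pairing of a cochain with a chain (evaluation / integration). -/
def pairC {n : ℕ} (c : SCochain I M R n) : SChain I M n →+ R :=
  FreeAbelianGroup.lift c

lemma pairC_add {n : ℕ} (c c' : SCochain I M R n) (x : SChain I M n) :
    pairC I M R (c + c') x = pairC I M R c x + pairC I M R c' x := by
  have key : ∀ (f g : SSimplex I M n → R) (y : FreeAbelianGroup (SSimplex I M n)),
      FreeAbelianGroup.lift (f + g) y = FreeAbelianGroup.lift f y + FreeAbelianGroup.lift g y := by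
    intro f g y
    induction y using FreeAbelianGroup.induction_on with
    | zero => simp
    | of σ => simp only [FreeAbelianGroup.lift_apply_of, Pi.add_apply]
    | neg σ h => simp only [map_neg, h]; abel
    | add y z hy hz => simp only [map_add, hy, hz]; abel
  exact key c c' x

/-- The coefficient map `ℤ → ℝ` on cochains. -/
def intToReal (n : ℕ) : SCochain I M ℤ n →+ SCochain I M ℝ n :=
  AddMonoidHom.mk' (fun c σ => ((c σ : ℤ) : ℝ))
    (by
      intro c c'
      funext σ
      show ((c σ + c' σ : ℤ) : ℝ) = ((c σ : ℤ) : ℝ) + ((c' σ : ℤ) : ℝ)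
      push_cast
      ring)

/-- Degree `n-1` part (with the convention that it is trivial for `n = 0`):
this hosts the middle ("real cochain") component of the Hopkins–Singer complex. -/
def hCompT : ℕ → Type
  | 0 => PUnit
  | (m + 1) => SCochain I M ℝ m

instance : ∀ n, AddCommGroup (hCompT I M n)
  | 0 => inferInstanceAs (AddCommGroup PUnit)
  | (m + 1) => inferInstanceAs (AddCommGroup (SCochain I M ℝ m))

/-- Differential from the `(n-1)`-st level into degree `n`. -/
def hd : ∀ n, hCompT I M n →+ SCochain I M ℝ n
  | 0 => 0
  | (m + 1) => scd I M ℝ m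

variable (Ω : ∀ n : ℕ, AddSubgroup (SCochain I M ℝ n))

/-- The Hopkins–Singer group `DC_s^n(M)`: triples `(c, h, ω)` of an integral `n`-cochain,
a real `(n-1)`-cochain and a differential form `ω` (an element of the de Rham subcomplex
`Ω ⊆ C^•_ℝ`, forms being viewed as real cochains by integration), where `ω = 0` if `n < s`. -/
def DCgrp (s n : ℕ) :
    AddSubgroup (SCochain I M ℤ n × hCompT I M n × SCochain I M ℝ n) where
  carrier := {x | x.2.2 ∈ Ω n ∧ (n < s → x.2.2 = 0)}
  zero_mem' := ⟨(Ω n).zero_mem, fun _ => rfl⟩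
  add_mem' := by
    rintro a b ⟨ha, ha'⟩ ⟨hb, hb'⟩
    exact ⟨(Ω n).add_mem ha hb, fun h => by
      show a.2.2 + b.2.2 = 0
      rw [ha' h, hb' h, add_zero]⟩
  neg_mem' := by
    rintro a ⟨ha, ha'⟩
    refine ⟨(Ω n).neg_mem ha, fun h => ?_⟩
    show -a.2.2 = 0
    rw [ha' h, neg_zero]

/-- The Hopkins–Singer differential `d(c,h,ω) = (dc, ω - c - dh, dω)`. -/
def dDC (hΩ : ∀ n x, x ∈ Ω n → scd I M ℝ n x ∈ Ω (n + 1)) (s n : ℕ) :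
    (DCgrp I M Ω s n) →+ (DCgrp I M Ω s (n + 1)) :=
  AddMonoidHom.mk'
    (fun x => ⟨(scd I M ℤ n x.1.1,
        x.1.2.2 - intToReal I M n x.1.1 - hd I M n x.1.2.1,
        scd I M ℝ n x.1.2.2),
      ⟨hΩ n _ x.2.1, fun h => by
        rw [x.2.2 (Nat.lt_of_succ_lt h)]; exact map_zero _⟩⟩)
    (by
      intro x y
      apply Subtype.ext
      simp only [AddSubgroup.coe_add, Prod.fst_add, Prod.snd_add, map_add, Prod.mk_add_mk,
        Prod.mk.injEq]
      refine ⟨trivial, Prod.ext ?_ ?_⟩ <;> (try simp only [Prod.fst_add, Prod.snd_add]) <;> abel)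

/-- Cohomology at the middle spot of a two-step complex `A → B → C`. -/
def Hq {A B C : Type*} [AddCommGroup A] [AddCommGroup B] [AddCommGroup C]
    (f : A →+ B) (g : B →+ C) : Type _ :=
  g.ker ⧸ ((f.range).addSubgroupOf g.ker)

instance {A B C : Type*} [AddCommGroup A] [AddCommGroup B] [AddCommGroup C]
    (f : A →+ B) (g : B →+ C) : AddCommGroup (Hq f g) :=
  inferInstanceAs (AddCommGroup (_ ⧸ _))

/-- Class of a cocycle in `Hq`. -/
def HqMk {A B C : Type*} [AddCommGroup A] [AddCommGroup B] [AddCommGroup C]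
    (f : A →+ B) (g : B →+ C) (b : B) (hb : b ∈ g.ker) : Hq f g :=
  QuotientAddGroup.mk (⟨b, hb⟩ : g.ker)

/-- Cycles (with the convention `Z_0 = C_0`, everything). -/
def Zcyc : ∀ n : ℕ, AddSubgroup (SChain I M n)
  | 0 => ⊤
  | (m + 1) => (sbd I M m).ker


section Stmt15

variable {E : Type} [NormedAddCommGroup E] [NormedSpace ℝ E]
  {H : Type} [TopologicalSpace H] (I : ModelWithCorners ℝ E H)
  (M : Type) [TopologicalSpace M] [ChartedSpace H M]

lemma pairC_zero' {n : ℕ} (x : SChain I M n) : pairC I M ℝ (0 : SCochain I M ℝ n) x = 0 := by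
  have key : ∀ (y : FreeAbelianGroup (SSimplex I M n)),
      FreeAbelianGroup.lift (0 : SSimplex I M n → ℝ) y = 0 := by
    intro y
    induction y using FreeAbelianGroup.induction_on with
    | zero => simp
    | of σ => simp only [FreeAbelianGroup.lift_apply_of, Pi.zero_apply]
    | neg σ h => simp only [map_neg, h, neg_zero]
    | add y z hy hz => simp only [map_add, hy, hz, add_zero]
  exact key x

lemma pairC_neg' {n : ℕ} (c : SCochain I M ℝ n) (x : SChain I M n) :
    pairC I M ℝ (-c) x = - pairC I M ℝ c x := by
  have := pairC_add I M ℝ (-c) c x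
  rw [neg_add_cancel, pairC_zero'] at this
  linarith

variable (Ω : ∀ n : ℕ, AddSubgroup (SCochain I M ℝ n))

/-- The group `Ω^2_{ℤ,cl}(M)` of closed `2`-forms with integral periods (forms are encoded as
elements of the de Rham subcomplex `Ω` of real smooth singular cochains; a form has integral
periods iff its pairing with every smooth singular `2`-cycle is an integer). -/
def OmegaZcl : AddSubgroup (SCochain I M ℝ 2) where
  carrier := {ω | ω ∈ Ω 2 ∧ scd I M ℝ 2 ω = 0 ∧
    ∀ S : SChain I M 2, sbd I M 1 S = 0 → ∃ z : ℤ, pairC I M ℝ ω S = z}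
  zero_mem' := ⟨(Ω 2).zero_mem, map_zero _, fun S _ => ⟨0, by rw [pairC_zero']; norm_num⟩⟩
  add_mem' := by
    rintro a b ⟨ha, ha', ha''⟩ ⟨hb, hb', hb''⟩
    refine ⟨(Ω 2).add_mem ha hb, by rw [map_add, ha', hb', add_zero], fun S hS => ?_⟩
    obtain ⟨z, hz⟩ := ha'' S hS
    obtain ⟨w, hw⟩ := hb'' S hS
    exact ⟨z + w, by rw [pairC_add, hz, hw]; push_cast; ring⟩
  neg_mem' := by
    rintro a ⟨ha, ha', ha''⟩
    refine ⟨(Ω 2).neg_mem ha, by rw [map_neg, ha', neg_zero], fun S hS => ?_⟩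
    obtain ⟨z, hz⟩ := ha'' S hS
    exact ⟨-z, by rw [pairC_neg', hz]; push_cast; ring⟩

/- ### Auxiliary lemmas -/

lemma finFaceId {n : ℕ} (i j : Fin (n+2)) (h : i ≤ j) (m : Fin (n+1)) :
    (i.castSucc).succAbove (j.succAbove m) = (j.succ).succAbove (i.succAbove m) := by
  dsimp [Fin.succAbove]
  rcases i with ⟨i, _⟩
  rcases j with ⟨j, _⟩
  rcases m with ⟨m, _⟩
  simp only [Fin.le_def] at h
  split_ifs <;> simp_all [Fin.lt_def, Fin.ext_iff] <;> omega

lemma faceLM_comp {n : ℕ} (a : Fin (n+3)) (b : Fin (n+2)) (x : Fin (n+1) → ℝ) (l : Fin (n+3)) :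
    faceLM (n+1) a (faceLM n b x) l = ∑ m, if a.succAbove (b.succAbove m) = l then x m else 0 := by
  rw [faceLM_apply]
  calc ∑ k, (if a.succAbove k = l then faceLM n b x k else 0)
      = ∑ k, ∑ m, (if b.succAbove m = k then (if a.succAbove k = l then x m else 0) else 0) := by
        refine Finset.sum_congr rfl fun k _ => ?_
        by_cases hkl : a.succAbove k = l
        · simp [hkl, faceLM_apply]
        · simp [hkl]
    _ = ∑ m, ∑ k, (if b.succAbove m = k then (if a.succAbove k = l then x m else 0) else 0) :=
        Finset.sum_comm
    _ = ∑ m, if a.succAbove (b.succAbove m) = l then x m else 0 := by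
        refine Finset.sum_congr rfl fun m _ => ?_
        rw [Finset.sum_ite_eq]
        simp

lemma SSimplex.ext' {n : ℕ} {σ τ : SSimplex I M n} (h : σ.toFun = τ.toFun) : σ = τ := by
  cases σ; cases τ; cases h; rfl

lemma face_face {n : ℕ} (σ : SSimplex I M (n+2)) (i j : Fin (n+2)) (h : i ≤ j) :
    (σ.face i.castSucc).face j = (σ.face j.succ).face i := by
  apply SSimplex.ext'
  show σ.toFun ∘ ⇑(faceLM (n+1) i.castSucc) ∘ ⇑(faceLM n j)
      = σ.toFun ∘ ⇑(faceLM (n+1) j.succ) ∘ ⇑(faceLM n i)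
  funext x
  simp only [Function.comp_apply]
  congr 1
  funext l
  rw [faceLM_comp, faceLM_comp]
  exact Finset.sum_congr rfl fun m _ => by rw [finFaceId i j h m]

lemma scd_apply {R : Type} [AddCommGroup R] {n : ℕ} (c : SCochain I M R n)
    (σ : SSimplex I M (n+1)) :
    scd I M R n c σ = ∑ i : Fin (n + 2), (-1 : ℤ) ^ (i : ℕ) • c (σ.face i) := rfl

lemma dd_zero {R : Type} [AddCommGroup R] {n : ℕ} (c : SCochain I M R n) :
    scd I M R (n+1) (scd I M R n c) = 0 := by
  funext σ
  show ∑ a : Fin (n + 3), (-1 : ℤ) ^ (a : ℕ) • scd I M R n c (σ.face a) = 0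
  have : ∀ a : Fin (n+3), (-1 : ℤ) ^ (a : ℕ) • scd I M R n c (σ.face a)
      = ∑ b : Fin (n+2), ((-1 : ℤ) ^ ((a : ℕ) + (b : ℕ))) • c ((σ.face a).face b) := by
    intro a
    rw [scd_apply, Finset.smul_sum]
    exact Finset.sum_congr rfl fun b _ => by rw [smul_smul, pow_add]
  rw [Finset.sum_congr rfl fun a _ => this a, ← Finset.sum_product']
  set f : Fin (n+3) × Fin (n+2) → R :=
    fun p => ((-1 : ℤ) ^ ((p.1 : ℕ) + (p.2 : ℕ))) • c ((σ.face p.1).face p.2) with hf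
  let S : Finset (Fin (n+3) × Fin (n+2)) :=
    Finset.univ.filter fun p => (p.1 : ℕ) ≤ (p.2 : ℕ)
  rw [Finset.univ_product_univ, ← Finset.sum_add_sum_compl S, ← eq_neg_iff_add_eq_zero,
    ← Finset.sum_neg_distrib]
  let φ : Fin (n+3) × Fin (n+2) → Fin (n+3) × Fin (n+2) :=
    fun p => (p.2.succ, (⟨min (p.1 : ℕ) (n+1), by omega⟩ : Fin (n+2)))
  let ψ : Fin (n+3) × Fin (n+2) → Fin (n+3) × Fin (n+2) :=
    fun p => ((⟨(p.2 : ℕ), by have := p.2.isLt; omega⟩ : Fin (n+3)),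
      (⟨(p.1 : ℕ) - 1, by have := p.1.isLt; omega⟩ : Fin (n+2)))
  apply Finset.sum_nbij' φ ψ
  · rintro ⟨a, b⟩ hab
    simp only [S, Finset.mem_filter, Finset.mem_univ, true_and] at hab
    simp only [φ, S, Finset.mem_compl, Finset.mem_filter, Finset.mem_univ, true_and, Fin.val_succ]
    omega
  · rintro ⟨a, b⟩ hab
    simp only [S, Finset.mem_compl, Finset.mem_filter, Finset.mem_univ, true_and] at hab
    simp only [ψ, S, Finset.mem_filter, Finset.mem_univ, true_and]
    omega
  · rintro ⟨a, b⟩ hab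
    simp only [S, Finset.mem_filter, Finset.mem_univ, true_and] at hab
    have hb : (b : ℕ) < n + 2 := b.isLt
    ext
    · simp only [φ, ψ, Fin.val_succ]
      omega
    · simp only [φ, ψ, Fin.val_succ]
      omega
  · rintro ⟨a, b⟩ hab
    simp only [S, Finset.mem_compl, Finset.mem_filter, Finset.mem_univ, true_and, not_le] at hab
    have hb : (b : ℕ) < n + 2 := b.isLt
    ext
    · simp only [φ, ψ, Fin.val_succ]
      omega
    · simp only [φ, ψ, Fin.val_succ]
      omega
  · rintro ⟨a, b⟩ hab
    simp only [S, Finset.mem_filter, Finset.mem_univ, true_and] at hab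
    have hb : (b : ℕ) < n + 2 := b.isLt
    have ha : (a : ℕ) < n + 2 := by omega
    set a' : Fin (n+2) := ⟨min (a : ℕ) (n+1), by omega⟩ with ha'
    have hcast : a'.castSucc = a := by
      ext
      simp only [Fin.coe_castSucc, ha']
      omega
    have hle : a' ≤ b := by
      rw [Fin.le_def]
      simp only [ha']
      omega
    have hface : (σ.face a).face b = (σ.face b.succ).face a' := by
      rw [← hcast]
      exact face_face I M σ a' b hle
    simp only [φ, hf, hface, Fin.val_succ]
    have hsign : ((b : ℕ) + 1 + (a' : ℕ)) = ((a : ℕ) + (b : ℕ)) + 1 := by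
      simp only [ha']
      omega
    rw [hsign, pow_succ]
    rw [mul_comm, neg_one_mul, neg_smul, neg_neg]


lemma pairC_of {R : Type} [AddCommGroup R] {n : ℕ} (c : SCochain I M R n) (σ : SSimplex I M n) :
    pairC I M R c (FreeAbelianGroup.of σ) = c σ :=
  FreeAbelianGroup.lift_apply_of _ _

lemma chainHom_ext {R : Type} [AddCommGroup R] {n : ℕ} {F G : SChain I M n →+ R}
    (h : ∀ σ, F (FreeAbelianGroup.of σ) = G (FreeAbelianGroup.of σ)) : F = G := by
  ext x
  refine FreeAbelianGroup.induction_on x ((map_zero F).trans (map_zero G).symm) h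
    (fun y hy => (map_neg F _).trans ((congrArg Neg.neg hy).trans (map_neg G _).symm))
    (fun y z hy hz => (map_add F _ _).trans ((congrArg₂ (· + ·) hy hz).trans (map_add G _ _).symm))

lemma sbd_of {n : ℕ} (σ : SSimplex I M (n+1)) :
    sbd I M n (FreeAbelianGroup.of σ) =
      ∑ i : Fin (n+2), (-1 : ℤ) ^ (i : ℕ) • FreeAbelianGroup.of (σ.face i) := by
  show (∑ i : Fin (n + 2),
      (-1 : ℤ) ^ (i : ℕ) • FreeAbelianGroup.map (fun σ : SSimplex I M (n+1) => σ.face i))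
      (FreeAbelianGroup.of σ) = _
  simp [FreeAbelianGroup.map_of_apply]

lemma pairC_scd {R : Type} [AddCommGroup R] {n : ℕ} (c : SCochain I M R n)
    (x : SChain I M (n+1)) :
    pairC I M R (scd I M R n c) x = pairC I M R c (sbd I M n x) := by
  have : pairC I M R (scd I M R n c) = (pairC I M R c).comp (sbd I M n) := by
    apply chainHom_ext
    intro σ
    rw [pairC_of]
    show _ = pairC I M R c (sbd I M n (FreeAbelianGroup.of σ))
    rw [sbd_of]
    refine (scd_apply I M c σ).trans (Eq.trans ?_ (map_sum (pairC I M R c) _ _).symm)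
    exact Finset.sum_congr rfl fun i _ => ((map_zsmul (pairC I M R c) _ _).trans
      (congrArg (((-1 : ℤ) ^ (i : ℕ)) • ·) (pairC_of I M c (σ.face i)))).symm
  rw [this]; rfl

lemma pairC_intToReal {n : ℕ} (c : SCochain I M ℤ n) (x : SChain I M n) :
    pairC I M ℝ (intToReal I M n c) x = ((pairC I M ℤ c x : ℤ) : ℝ) := by
  have : pairC I M ℝ (intToReal I M n c) = (Int.castAddHom ℝ).comp (pairC I M ℤ c) := by
    apply chainHom_ext
    intro σ
    rw [pairC_of]
    show _ = Int.castAddHom ℝ (pairC I M ℤ c (FreeAbelianGroup.of σ))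
    rw [pairC_of]
    rfl
  rw [this]; rfl

lemma coe_int_zero (z : ℤ) : (((z : ℝ)) : AddCircle (1 : ℝ)) = 0 := by
  rw [AddCircle.coe_eq_zero_iff]; exact ⟨z, by simp⟩

lemma exists_int_of_coe_zero (x : ℝ) (h : (x : AddCircle (1 : ℝ)) = 0) : ∃ z : ℤ, x = z := by
  rw [AddCircle.coe_eq_zero_iff] at h
  obtain ⟨z, hz⟩ := h
  exact ⟨z, by simpa using hz.symm⟩

/-- Reduction of a real cochain modulo `ℤ`. -/
def toQ (n : ℕ) : SCochain I M ℝ n →+ SCochain I M (AddCircle (1:ℝ)) n :=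
  AddMonoidHom.mk' (fun c σ => ((c σ : ℝ) : AddCircle (1:ℝ))) (by
    intro c c'
    funext σ
    show (((c σ) + (c' σ) : ℝ) : AddCircle (1:ℝ)) = _
    rw [AddCircle.coe_add]
    rfl)

lemma toQ_apply {n : ℕ} (c : SCochain I M ℝ n) (σ : SSimplex I M n) :
    toQ I M n c σ = ((c σ : ℝ) : AddCircle (1:ℝ)) := rfl

lemma scd_comp_hom {R R' : Type} [AddCommGroup R] [AddCommGroup R'] (f : R →+ R') {n : ℕ}
    (c : SCochain I M R n) :
    scd I M R' n (fun σ => f (c σ)) = fun σ => f (scd I M R n c σ) := by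
  funext σ
  show ∑ i : Fin (n+2), (-1:ℤ)^(i:ℕ) • f (c (σ.face i)) = _
  show _ = f (∑ i : Fin (n+2), (-1:ℤ)^(i:ℕ) • c (σ.face i))
  rw [map_sum]
  exact Finset.sum_congr rfl fun i _ => (map_zsmul f _ _).symm

lemma scd_toQ {n : ℕ} (c : SCochain I M ℝ n) :
    scd I M (AddCircle (1:ℝ)) n (toQ I M n c) = toQ I M (n+1) (scd I M ℝ n c) :=
  scd_comp_hom I M (QuotientAddGroup.mk' (AddSubgroup.zmultiples (1:ℝ))) c

lemma scd_intToReal {n : ℕ} (c : SCochain I M ℤ n) :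
    scd I M ℝ n (intToReal I M n c) = intToReal I M (n+1) (scd I M ℤ n c) :=
  scd_comp_hom I M (Int.castAddHom ℝ) c

lemma intToReal_inj {n : ℕ} {c c' : SCochain I M ℤ n}
    (h : intToReal I M n c = intToReal I M n c') : c = c' :=
  funext fun σ => Int.cast_injective (congrFun h σ : ((c σ : ℤ) : ℝ) = ((c' σ : ℤ) : ℝ))

lemma toQ_intToReal {n : ℕ} (c : SCochain I M ℤ n) : toQ I M n (intToReal I M n c) = 0 :=
  funext fun σ => coe_int_zero (c σ)

/-- Pointwise lift of an `ℝ/ℤ`-valued cochain to a real cochain. -/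
noncomputable def rliftC (n : ℕ) (k : SCochain I M (AddCircle (1:ℝ)) n) : SCochain I M ℝ n :=
  fun σ => Quotient.out (k σ)

lemma toQ_rliftC (n : ℕ) (k : SCochain I M (AddCircle (1:ℝ)) n) :
    toQ I M n (rliftC I M n k) = k :=
  funext fun σ => QuotientAddGroup.out_eq' (k σ)

/-- Pointwise extraction of an integral cochain from a real cochain vanishing mod `ℤ`. -/
noncomputable def izer (n : ℕ) (c : SCochain I M ℝ n) (hc : toQ I M n c = 0) :
    SCochain I M ℤ n :=
  fun σ => Classical.choose (exists_int_of_coe_zero (c σ) (congrFun hc σ))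

lemma izer_spec (n : ℕ) (c : SCochain I M ℝ n) (hc : toQ I M n c = 0) :
    intToReal I M n (izer I M n c hc) = c :=
  funext fun σ => (Classical.choose_spec (exists_int_of_coe_zero (c σ) (congrFun hc σ))).symm

variable (hW : ∀ n x, x ∈ Ω n → scd I M ℝ n x ∈ Ω (n + 1))

lemma mem_kerDDC_iff (x : DCgrp I M Ω 2 2) :
    x ∈ (dDC I M Ω hW 2 2).ker ↔
      scd I M ℤ 2 x.1.1 = 0 ∧
      x.1.2.2 - intToReal I M 2 x.1.1 - scd I M ℝ 1 (x.1.2.1 : SCochain I M ℝ 1) = 0 ∧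
      scd I M ℝ 2 x.1.2.2 = 0 := by
  rw [AddMonoidHom.mem_ker]
  constructor
  · intro hz
    have h1 := congrArg Subtype.val hz
    exact ⟨congrArg Prod.fst h1, congrArg (fun p => p.2.1) h1, congrArg (fun p => p.2.2) h1⟩
  · rintro ⟨h1, h2, h3⟩
    apply Subtype.ext
    show (scd I M ℤ 2 x.1.1,
      (x.1.2.2 - intToReal I M 2 x.1.1 - scd I M ℝ 1 (x.1.2.1 : SCochain I M ℝ 1),
        scd I M ℝ 2 x.1.2.2)) = (0 : _)
    rw [h1, h2, h3]
    rfl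

lemma HqMk_eq_zero {A B C : Type*} [AddCommGroup A] [AddCommGroup B] [AddCommGroup C]
    (f : A →+ B) (g : B →+ C) (b : B) (hb : b ∈ g.ker) (u : A) (hu : f u = b) :
    HqMk f g b hb = 0 := by
  unfold HqMk
  show (QuotientAddGroup.mk (⟨b, hb⟩ : g.ker) : g.ker ⧸ ((f.range).addSubgroupOf g.ker)) = 0
  rw [QuotientAddGroup.eq_zero_iff, AddSubgroup.mem_addSubgroupOf]
  exact ⟨u, hu⟩

lemma HqMk_add {A B C : Type*} [AddCommGroup A] [AddCommGroup B] [AddCommGroup C]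
    (f : A →+ B) (g : B →+ C) (b b' : B) (hb : b ∈ g.ker) (hb' : b' ∈ g.ker) :
    HqMk f g (b + b') (g.ker.add_mem hb hb') = HqMk f g b hb + HqMk f g b' hb' := rfl

/-- Two cocycles `(c,h,0)` and `(c',h',0)` with `h ≡ h' mod ℤ` give the same class. -/
lemma class_indep (x y : DCgrp I M Ω 2 2)
    (hx : x ∈ (dDC I M Ω hW 2 2).ker) (hy : y ∈ (dDC I M Ω hW 2 2).ker)
    (h3x : x.1.2.2 = 0) (h3y : y.1.2.2 = 0)
    (hq : toQ I M 1 (x.1.2.1 : SCochain I M ℝ 1) = toQ I M 1 (y.1.2.1 : SCochain I M ℝ 1)) :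
    HqMk (dDC I M Ω hW 2 1) (dDC I M Ω hW 2 2) x hx = HqMk _ _ y hy := by
  have hdiff : toQ I M 1 ((x.1.2.1 : SCochain I M ℝ 1) - (y.1.2.1 : SCochain I M ℝ 1)) = 0 := by
    exact (map_sub (toQ I M 1) _ _).trans (sub_eq_zero.mpr hq)
  set a : SCochain I M ℤ 1 := izer I M 1 _ hdiff with ha
  have haspec : intToReal I M 1 a =
      (x.1.2.1 : SCochain I M ℝ 1) - (y.1.2.1 : SCochain I M ℝ 1) := izer_spec I M 1 _ hdiff
  obtain ⟨hx1, hx2, hx3⟩ := (mem_kerDDC_iff I M Ω hW x).mp hx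
  obtain ⟨hy1, hy2, hy3⟩ := (mem_kerDDC_iff I M Ω hW y).mp hy
  rw [h3x, zero_sub] at hx2
  rw [h3y, zero_sub] at hy2
  -- intToReal x.c = - scd x.h  and similarly for y
  have hxc : intToReal I M 2 x.1.1 = -(scd I M ℝ 1 (x.1.2.1 : SCochain I M ℝ 1)) := by
    have := sub_eq_zero.mp hx2
    rw [← this]
    abel
  have hyc : intToReal I M 2 y.1.1 = -(scd I M ℝ 1 (y.1.2.1 : SCochain I M ℝ 1)) := by
    have := sub_eq_zero.mp hy2
    rw [← this]
    abel
  unfold HqMk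
  show (QuotientAddGroup.mk (⟨x, hx⟩ : (dDC I M Ω hW 2 2).ker) : (dDC I M Ω hW 2 2).ker ⧸
    ((dDC I M Ω hW 2 1).range.addSubgroupOf (dDC I M Ω hW 2 2).ker)) = QuotientAddGroup.mk ⟨y, hy⟩
  rw [QuotientAddGroup.eq, AddSubgroup.mem_addSubgroupOf]
  refine ⟨⟨(a, (0 : SCochain I M ℝ 0), (0 : SCochain I M ℝ 1)), ⟨(Ω 1).zero_mem, fun _ => rfl⟩⟩, ?_⟩
  apply Subtype.ext
  have hval : ((-(⟨x, hx⟩ : (dDC I M Ω hW 2 2).ker) + ⟨y, hy⟩ : (dDC I M Ω hW 2 2).ker) :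
      DCgrp I M Ω 2 2) = -x + y := rfl
  show (scd I M ℤ 1 a,
      ((0 : SCochain I M ℝ 1) - intToReal I M 1 a - scd I M ℝ 0 (0 : SCochain I M ℝ 0),
        scd I M ℝ 1 (0 : SCochain I M ℝ 1))) = _
  rw [hval]
  refine Prod.ext ?_ (Prod.ext ?_ ?_)
  · show scd I M ℤ 1 a = -x.1.1 + y.1.1
    apply intToReal_inj I M
    have h' : intToReal I M 2 (scd I M ℤ 1 a) = scd I M ℝ 1 (intToReal I M 1 a) :=
      (scd_intToReal I M a).symm
    rw [h', haspec]
    refine (map_sub (scd I M ℝ 1) _ _).trans ?_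
    rw [map_add, map_neg, hxc, hyc]
    abel
  · show (0 : SCochain I M ℝ 1) - intToReal I M 1 a - scd I M ℝ 0 (0 : SCochain I M ℝ 0)
      = -(x.1.2.1 : SCochain I M ℝ 1) + (y.1.2.1 : SCochain I M ℝ 1)
    rw [map_zero, sub_zero, zero_sub, haspec]
    exact (neg_sub _ _).trans (sub_eq_neg_add _ _)
  · show scd I M ℝ 1 (0 : SCochain I M ℝ 1) = -x.1.2.2 + y.1.2.2
    rw [map_zero, h3x, h3y, neg_zero, add_zero]

/-- The cocycle `(-(d h̃), h̃, 0)` attached to an `ℝ/ℤ`-valued cocycle, where `h̃` is a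
pointwise lift. -/
lemma iElt_aux (k : (scd I M (AddCircle (1:ℝ)) 1).ker) :
    toQ I M 2 (-(scd I M ℝ 1 (rliftC I M 1 k.1))) = 0 := by
  rw [map_neg, ← scd_toQ, toQ_rliftC]
  rw [AddMonoidHom.mem_ker.mp k.2, neg_zero]

noncomputable def iElt (k : (scd I M (AddCircle (1:ℝ)) 1).ker) : DCgrp I M Ω 2 2 :=
  ⟨(izer I M 2 (-(scd I M ℝ 1 (rliftC I M 1 k.1))) (iElt_aux I M k), rliftC I M 1 k.1,
    (0 : SCochain I M ℝ 2)), ⟨(Ω 2).zero_mem, fun _ => rfl⟩⟩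

lemma iElt_fst (k : (scd I M (AddCircle (1:ℝ)) 1).ker) :
    intToReal I M 2 (iElt I M Ω k).1.1 = -(scd I M ℝ 1 (rliftC I M 1 k.1)) :=
  izer_spec I M 2 _ (iElt_aux I M k)

lemma iElt_mem_ker (k : (scd I M (AddCircle (1:ℝ)) 1).ker) :
    iElt I M Ω k ∈ (dDC I M Ω hW 2 2).ker := by
  rw [mem_kerDDC_iff]
  refine ⟨?_, ?_, map_zero _⟩
  · apply intToReal_inj I M
    rw [← scd_intToReal, iElt_fst, map_neg, dd_zero, neg_zero, map_zero]
  · show (0 : SCochain I M ℝ 2) - intToReal I M 2 (iElt I M Ω k).1.1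
      - scd I M ℝ 1 (rliftC I M 1 k.1) = 0
    rw [iElt_fst]
    abel

/-- The underlying map of `ι` on cocycles. -/
noncomputable def iota0 : (scd I M (AddCircle (1:ℝ)) 1).ker →+
    Hq (dDC I M Ω hW 2 1) (dDC I M Ω hW 2 2) :=
  AddMonoidHom.mk' (fun k => HqMk _ _ (iElt I M Ω k) (iElt_mem_ker I M Ω hW k)) (by
    intro k k'
    rw [show HqMk _ _ (iElt I M Ω k) (iElt_mem_ker I M Ω hW k)
        + HqMk _ _ (iElt I M Ω k') (iElt_mem_ker I M Ω hW k')
      = HqMk (dDC I M Ω hW 2 1) (dDC I M Ω hW 2 2) (iElt I M Ω k + iElt I M Ω k')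
        ((dDC I M Ω hW 2 2).ker.add_mem (iElt_mem_ker I M Ω hW k) (iElt_mem_ker I M Ω hW k'))
      from (HqMk_add _ _ _ _ _ _).symm]
    apply class_indep
    · rfl
    · show (iElt I M Ω k).1.2.2 + (iElt I M Ω k').1.2.2 = 0
      show (0 : SCochain I M ℝ 2) + 0 = 0
      rw [add_zero]
    · show toQ I M 1 (rliftC I M 1 (k + k').1) =
        toQ I M 1 (rliftC I M 1 k.1 + rliftC I M 1 k'.1)
      rw [map_add, toQ_rliftC, toQ_rliftC, toQ_rliftC]
      rfl)

lemma iota0_vanish (u : (scd I M (AddCircle (1:ℝ)) 1).ker)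
    (hu : u ∈ ((scd I M (AddCircle (1:ℝ)) 0).range).addSubgroupOf
      (scd I M (AddCircle (1:ℝ)) 1).ker) :
    iota0 I M Ω hW u = 0 := by
  rw [AddSubgroup.mem_addSubgroupOf] at hu
  obtain ⟨gq, hgq⟩ := hu
  apply HqMk_eq_zero
  case u =>
    refine ⟨(izer I M 1 (scd I M ℝ 0 (rliftC I M 0 gq) - rliftC I M 1 u.1) ?_,
      -(rliftC I M 0 gq), (0 : SCochain I M ℝ 1)), ⟨(Ω 1).zero_mem, fun _ => rfl⟩⟩
    rw [map_sub, ← scd_toQ, toQ_rliftC, toQ_rliftC, hgq, sub_self]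
  apply Subtype.ext
  show (scd I M ℤ 1 _, ((0 : SCochain I M ℝ 1) - intToReal I M 1 _ - scd I M ℝ 0 (-(rliftC I M 0 gq)),
      scd I M ℝ 1 (0 : SCochain I M ℝ 1))) =
    ((iElt I M Ω u).1.1, (rliftC I M 1 u.1, (0 : SCochain I M ℝ 2)))
  have hsp := izer_spec I M 1 (scd I M ℝ 0 (rliftC I M 0 gq) - rliftC I M 1 u.1)
    (by rw [map_sub, ← scd_toQ, toQ_rliftC, toQ_rliftC, hgq, sub_self])
  refine Prod.ext ?_ (Prod.ext ?_ ?_)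
  · show scd I M ℤ 1 _ = (iElt I M Ω u).1.1
    apply intToReal_inj I M
    rw [← scd_intToReal, hsp, iElt_fst, map_sub, dd_zero]
    abel
  · show (0 : SCochain I M ℝ 1) - intToReal I M 1 _ - scd I M ℝ 0 (-(rliftC I M 0 gq))
      = rliftC I M 1 u.1
    rw [hsp, map_neg]
    abel
  · exact map_zero _

/-- The injection `ι : H¹(M, ℝ/ℤ) → H²(DC)`. -/
noncomputable def iotaH : Hq (scd I M (AddCircle (1 : ℝ)) 0) (scd I M (AddCircle (1 : ℝ)) 1) →+
    Hq (dDC I M Ω hW 2 1) (dDC I M Ω hW 2 2) :=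
  QuotientAddGroup.lift _ (iota0 I M Ω hW) (iota0_vanish I M Ω hW)

lemma iotaH_mk (k : SCochain I M (AddCircle (1:ℝ)) 1)
    (hk : k ∈ (scd I M (AddCircle (1:ℝ)) 1).ker) :
    iotaH I M Ω hW (HqMk _ _ k hk) =
      HqMk _ _ (iElt I M Ω ⟨k, hk⟩) (iElt_mem_ker I M Ω hW ⟨k, hk⟩) := rfl

lemma omega_mem (x : DCgrp I M Ω 2 2) (hx : x ∈ (dDC I M Ω hW 2 2).ker) :
    x.1.2.2 ∈ OmegaZcl I M Ω := by
  obtain ⟨h1, h2, h3⟩ := (mem_kerDDC_iff I M Ω hW x).mp hx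
  refine ⟨x.2.1, h3, fun S hS => ?_⟩
  have hω : x.1.2.2 = intToReal I M 2 x.1.1 + scd I M ℝ 1 (x.1.2.1 : SCochain I M ℝ 1) := by
    rw [sub_sub] at h2
    exact sub_eq_zero.mp h2
  refine ⟨pairC I M ℤ x.1.1 S, ?_⟩
  rw [hω, pairC_add, pairC_intToReal, pairC_scd I M (x.1.2.1 : SCochain I M ℝ 1) S, hS, map_zero, add_zero]

/-- The underlying map of `η` on cocycles. -/
noncomputable def eta0 : ((dDC I M Ω hW 2 2).ker) →+ OmegaZcl I M Ω :=
  AddMonoidHom.mk' (fun x => ⟨x.1.1.2.2, omega_mem I M Ω hW x.1 x.2⟩)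
    (fun x y => Subtype.ext rfl)

lemma eta0_vanish (u : (dDC I M Ω hW 2 2).ker)
    (hu : u ∈ ((dDC I M Ω hW 2 1).range).addSubgroupOf (dDC I M Ω hW 2 2).ker) :
    eta0 I M Ω hW u = 0 := by
  rw [AddSubgroup.mem_addSubgroupOf] at hu
  obtain ⟨v, hv⟩ := hu
  apply Subtype.ext
  show (u.1).1.2.2 = 0
  have := congrArg (fun w : DCgrp I M Ω 2 2 => w.1.2.2) hv
  rw [← this]
  show scd I M ℝ 1 v.1.2.2 = 0
  rw [v.2.2 (by norm_num), map_zero]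

/-- The map `η : H²(DC) → Ω²_{ℤ,cl}`. -/
noncomputable def etaH : Hq (dDC I M Ω hW 2 1) (dDC I M Ω hW 2 2) →+ OmegaZcl I M Ω :=
  QuotientAddGroup.lift _ (eta0 I M Ω hW) (eta0_vanish I M Ω hW)

lemma etaH_mk (x : DCgrp I M Ω 2 2) (hx : x ∈ (dDC I M Ω hW 2 2).ker) :
    etaH I M Ω hW (HqMk _ _ x hx) = ⟨x.1.2.2, omega_mem I M Ω hW x hx⟩ := rfl


lemma iotaH_inj : Function.Injective (iotaH I M Ω hW) := by
  rw [injective_iff_map_eq_zero]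
  intro q
  refine QuotientAddGroup.induction_on q ?_
  intro kk hq
  obtain ⟨k, hk⟩ := kk
  rw [show (QuotientAddGroup.mk (⟨k, hk⟩ : (scd I M (AddCircle (1:ℝ)) 1).ker) :
      Hq (scd I M (AddCircle (1 : ℝ)) 0) (scd I M (AddCircle (1 : ℝ)) 1)) = HqMk _ _ k hk
    from rfl] at hq ⊢
  rw [iotaH_mk] at hq
  unfold HqMk at hq
  change (QuotientAddGroup.mk _ : (dDC I M Ω hW 2 2).ker ⧸
    ((dDC I M Ω hW 2 1).range.addSubgroupOf (dDC I M Ω hW 2 2).ker)) = 0 at hq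
  rw [QuotientAddGroup.eq_zero_iff, AddSubgroup.mem_addSubgroupOf, AddMonoidHom.mem_range] at hq
  obtain ⟨u, hu⟩ := hq
  have hω0 : u.1.2.2 = 0 := u.2.2 (by norm_num)
  have h2 : u.1.2.2 - intToReal I M 1 u.1.1 - scd I M ℝ 0 (u.1.2.1 : SCochain I M ℝ 0)
      = rliftC I M 1 k :=
    congrArg (fun w : DCgrp I M Ω 2 2 => (w.1.2.1 : SCochain I M ℝ 1)) hu
  have h3 := congrArg (toQ I M 1) h2
  rw [toQ_rliftC, map_sub, map_sub, toQ_intToReal, ← scd_toQ I M (u.1.2.1 : SCochain I M ℝ 0), hω0, map_zero] at h3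
  apply HqMk_eq_zero _ _ _ _ (-(toQ I M 0 (u.1.2.1 : SCochain I M ℝ 0)))
  rw [map_neg, ← h3]
  abel

lemma etaH_surj : Function.Surjective (etaH I M Ω hW) := by
  rintro ⟨ω, hmem⟩
  obtain ⟨hΩ2, hcl, hper⟩ := hmem
  set qh : ℝ →+ AddCircle (1:ℝ) := QuotientAddGroup.mk' (AddSubgroup.zmultiples (1:ℝ)) with hqh
  set ψ : SChain I M 2 →+ AddCircle (1:ℝ) := qh.comp (pairC I M ℝ ω) with hψ
  have hψ0 : ∀ S ∈ (sbd I M 1).ker, ψ S = 0 := by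
    intro S hS
    obtain ⟨z, hz⟩ := hper S hS
    show qh (pairC I M ℝ ω S) = 0
    rw [hz]
    exact coe_int_zero z
  set ψq := QuotientAddGroup.lift ((sbd I M 1).ker) ψ hψ0 with hψq
  set e := QuotientAddGroup.quotientKerEquivRange (sbd I M 1) with he
  set g0 : ((sbd I M 1).range) →+ AddCircle (1:ℝ) := ψq.comp e.symm.toAddMonoidHom with hg0
  have hbaer : Module.Baer ℤ (AddCircle (1:ℝ)) := Module.Baer.of_divisible _
  obtain ⟨hbar, hhbar⟩ := hbaer.extension_property_addMonoidHom
    ((sbd I M 1).range.subtype) Subtype.val_injective g0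
  have hkey : ∀ S : SChain I M 2, hbar (sbd I M 1 S) = ψ S := by
    intro S
    have h2 : hbar (sbd I M 1 S) = g0 (e (QuotientAddGroup.mk S)) :=
      DFunLike.congr_fun hhbar (e (QuotientAddGroup.mk S))
    have h3 : e.symm (e (QuotientAddGroup.mk S)) = QuotientAddGroup.mk S :=
      AddEquiv.symm_apply_apply _ _
    calc hbar (sbd I M 1 S) = g0 (e (QuotientAddGroup.mk S)) := h2
      _ = ψq (e.symm (e (QuotientAddGroup.mk S))) := rfl
      _ = ψq (QuotientAddGroup.mk S) := by rw [h3]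
      _ = ψ S := rfl
  set k : SCochain I M (AddCircle (1:ℝ)) 1 := fun σ => hbar (FreeAbelianGroup.of σ) with hkdef
  have hscdk : scd I M (AddCircle (1:ℝ)) 1 k = toQ I M 2 ω := by
    funext σ
    rw [scd_apply]
    have hsum : ∑ i : Fin 3, (-1:ℤ)^(i:ℕ) • k (σ.face i)
        = hbar (∑ i : Fin 3, (-1:ℤ)^(i:ℕ) • FreeAbelianGroup.of (σ.face i)) := by
      refine Eq.trans ?_ (map_sum hbar _ _).symm
      exact Finset.sum_congr rfl fun i _ => (map_zsmul hbar _ _).symm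
    rw [hsum]
    refine ((congrArg hbar (sbd_of I M σ).symm).trans (hkey _)).trans ?_
    show qh (pairC I M ℝ ω (FreeAbelianGroup.of σ)) = toQ I M 2 ω σ
    rw [pairC_of]
    rfl
  have hint : toQ I M 2 (ω - scd I M ℝ 1 (rliftC I M 1 k)) = 0 := by
    rw [map_sub, ← scd_toQ, toQ_rliftC, hscdk, sub_self]
  set c : SCochain I M ℤ 2 := izer I M 2 _ hint with hcdef
  have hcspec : intToReal I M 2 c = ω - scd I M ℝ 1 (rliftC I M 1 k) := izer_spec I M 2 _ hint
  set x : DCgrp I M Ω 2 2 :=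
    ⟨(c, rliftC I M 1 k, ω), ⟨hΩ2, fun hlt => absurd hlt (by norm_num)⟩⟩ with hxdef
  have hx : x ∈ (dDC I M Ω hW 2 2).ker := by
    rw [mem_kerDDC_iff]
    refine ⟨?_, ?_, hcl⟩
    · apply intToReal_inj I M
      have h' : intToReal I M 3 (scd I M ℤ 2 c) = scd I M ℝ 2 (intToReal I M 2 c) :=
        (scd_intToReal I M c).symm
      rw [h', hcspec, map_sub, hcl, dd_zero, map_zero]
      abel
    · show ω - intToReal I M 2 c - scd I M ℝ 1 (rliftC I M 1 k) = 0
      rw [hcspec]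
      abel
  refine ⟨HqMk _ _ x hx, ?_⟩
  rw [etaH_mk]

lemma exactness (q : Hq (dDC I M Ω hW 2 1) (dDC I M Ω hW 2 2)) :
    etaH I M Ω hW q = 0 ↔ q ∈ (iotaH I M Ω hW).range := by
  constructor
  · refine QuotientAddGroup.induction_on q ?_
    intro vv h0
    obtain ⟨v, hv⟩ := vv
    have hω : v.1.2.2 = 0 := congrArg Subtype.val h0
    have hk : toQ I M 1 (v.1.2.1 : SCochain I M ℝ 1) ∈ (scd I M (AddCircle (1:ℝ)) 1).ker := by
      rw [AddMonoidHom.mem_ker, scd_toQ I M (v.1.2.1 : SCochain I M ℝ 1)]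
      obtain ⟨h1, h2, h3⟩ := (mem_kerDDC_iff I M Ω hW v).mp hv
      have h2' : v.1.2.2 - intToReal I M 2 v.1.1 = scd I M ℝ 1 (v.1.2.1 : SCochain I M ℝ 1) :=
        sub_eq_zero.mp h2
      rw [← h2', hω, zero_sub, map_neg, toQ_intToReal, neg_zero]
    refine AddMonoidHom.mem_range.mpr ?_
    refine ⟨HqMk _ _ _ hk, ?_⟩
    refine (iotaH_mk I M Ω hW _ hk).trans ?_
    refine class_indep I M Ω hW _ v (iElt_mem_ker I M Ω hW _) hv rfl hω ?_
    show toQ I M 1 (rliftC I M 1 (toQ I M 1 (v.1.2.1 : SCochain I M ℝ 1)))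
      = toQ I M 1 (v.1.2.1 : SCochain I M ℝ 1)
    exact toQ_rliftC I M 1 _
  · intro hr
    obtain ⟨y, rfl⟩ := AddMonoidHom.mem_range.mp hr
    refine QuotientAddGroup.induction_on y ?_
    intro kk
    exact Subtype.ext rfl

/-- (Cheeger–Simons exact sequence.)  For a smooth manifold `M` there is a
short exact sequence of abelian groups
`0 → H^1(M, ℝ/ℤ) → H^2(DC_2^•(M)) → Ω^2_{ℤ,cl}(M) → 0`,
where the right map sends the class of `(c, h, ω)` to `ω`, and the left map sends the class
of `h mod ℤ` to the class of `(c, h, 0)`. -/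
theorem stmt15
    [IsManifold I (⊤ : ℕ∞) M]
    (hΩ : ∀ n x, x ∈ Ω n → scd I M ℝ n x ∈ Ω (n + 1)) :
    ∃ (ι : Hq (scd I M (AddCircle (1 : ℝ)) 0) (scd I M (AddCircle (1 : ℝ)) 1) →+
            Hq (dDC I M Ω hΩ 2 1) (dDC I M Ω hΩ 2 2))
      (η : Hq (dDC I M Ω hΩ 2 1) (dDC I M Ω hΩ 2 2) →+ OmegaZcl I M Ω),
      Function.Injective ι ∧
      Function.Surjective η ∧
      (∀ x, η x = 0 ↔ x ∈ ι.range) ∧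
      -- `η` sends the class of `(c, h, ω)` to `ω`:
      (∀ (x : DCgrp I M Ω 2 2) (hx : x ∈ (dDC I M Ω hΩ 2 2).ker)
        (hmem : x.1.2.2 ∈ OmegaZcl I M Ω),
        η (HqMk _ _ x hx) = ⟨x.1.2.2, hmem⟩) ∧
      -- `ι` sends the class of `h mod ℤ` to the class of `(c, h, 0)`:
      (∀ (x : DCgrp I M Ω 2 2) (hx : x ∈ (dDC I M Ω hΩ 2 2).ker),
        x.1.2.2 = 0 →
        ∀ hker : (fun σ => (((x.1.2.1 : SCochain I M ℝ 1) σ : ℝ) : AddCircle (1 : ℝ)) :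
            SCochain I M (AddCircle (1 : ℝ)) 1) ∈ (scd I M (AddCircle (1 : ℝ)) 1).ker,
          ι (HqMk _ _ _ hker) = HqMk _ _ x hx) := by
  refine ⟨iotaH I M Ω hΩ, etaH I M Ω hΩ, iotaH_inj I M Ω hΩ, etaH_surj I M Ω hΩ,
    exactness I M Ω hΩ, ?_, ?_⟩
  · intro x hx hmem
    rw [etaH_mk]
  · intro x hx hx3 hker
    refine (iotaH_mk I M Ω hΩ _ hker).trans ?_
    refine class_indep I M Ω hΩ _ x (iElt_mem_ker I M Ω hΩ _) hx rfl hx3 ?_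
    exact (toQ_rliftC I M 1 _).trans rfl

end Stmt15

end
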